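/- Let n ≥ 3 and 0 ≤ r < n. Let A be a symmetric n×n matrix over a field K with more than 2 elements, written in block form A = [[a, L, b],[L^T, B, C],[b, C^T, c]] with B an (n-2)×(n-2) symmetric matrix. Let d ∈ K and let N be the symmetric matrix with entries N_{1,n} = N_{n,1} = 1, N_{n,n} = d, and all other entries 0. If rank(A + tN) ≤ r for all t ∈ K, then rank(B) ≤ r - 2. -/

import Mathlib

open Matrix

private lemma aux_finrank_le {K M N : Type*} [Field K] [AddCommGroup M] [Module K M]
    [AddCommGroup N] [Module K N]
    (p : Submodule K M) (q : Submodule K N) [Module.Finite K q]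
    (g : M →ₗ[K] N)
    (h1 : ∀ v ∈ p, g v ∈ q) (h2 : ∀ v ∈ p, g v = 0 → v = 0) :
    Module.finrank K p ≤ Module.finrank K q := by
  have hinj : Function.Injective (g.restrict h1) := by
    intro x y hxy
    have hval : g x.1 = g y.1 := congrArg Subtype.val hxy
    have hsub : g (x.1 - y.1) = 0 := by rw [map_sub, hval, sub_self]
    exact Subtype.ext (sub_eq_zero.mp (h2 _ (Submodule.sub_mem p x.2 y.2) hsub))
  exact LinearMap.finrank_le_finrank_of_injective hinj

private lemma aux_sum_split {K : Type*} [AddCommMonoid K] {n : ℕ} (hn : 3 ≤ n) (g : Fin n → K) :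
    ∑ i, g i = g ⟨0, by omega⟩ + g ⟨n - 1, by omega⟩
      + ∑ j : Fin (n - 2), g ⟨j.1 + 1, by have := j.2; omega⟩ := by
  have h1 : (⟨0, by omega⟩ : Fin n) ∉ insert (⟨n - 1, by omega⟩ : Fin n)
      (Finset.image (fun j : Fin (n - 2) => (⟨j.1 + 1, by have := j.2; omega⟩ : Fin n))
        Finset.univ) := by
    simp only [Finset.mem_insert, Finset.mem_image, Finset.mem_univ, true_and, not_or,
      not_exists]
    refine ⟨fun h => ?_, fun j h => ?_⟩
    · rw [Fin.ext_iff] at h; simp at h; omega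
    · rw [Fin.ext_iff] at h; simp at h
  have h2 : (⟨n - 1, by omega⟩ : Fin n) ∉
      Finset.image (fun j : Fin (n - 2) => (⟨j.1 + 1, by have := j.2; omega⟩ : Fin n))
        Finset.univ := by
    simp only [Finset.mem_image, Finset.mem_univ, true_and, not_exists]
    intro j h; rw [Fin.ext_iff] at h; have := j.2; simp at h; omega
  have himg : (Finset.univ : Finset (Fin n)) = insert ⟨0, by omega⟩ (insert ⟨n - 1, by omega⟩
      (Finset.image (fun j : Fin (n - 2) => (⟨j.1 + 1, by have := j.2; omega⟩ : Fin n))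
        Finset.univ)) := by
    ext i
    simp only [Finset.mem_univ, true_iff, Finset.mem_insert, Finset.mem_image, Finset.mem_univ,
      true_and]
    by_cases h0 : i.1 = 0
    · exact Or.inl (Fin.ext h0)
    · by_cases hN : i.1 = n - 1
      · exact Or.inr (Or.inl (Fin.ext hN))
      · have hi := i.2
        refine Or.inr (Or.inr ⟨⟨i.1 - 1, by omega⟩, Fin.ext ?_⟩)
        simp; omega
  rw [himg, Finset.sum_insert h1, Finset.sum_insert h2,
    Finset.sum_image (by
      intro x _ y _ h; rw [Fin.ext_iff] at h; simp at h; exact Fin.ext h), add_assoc]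
theorem symmetric_corner_lemma (K : Type*) [Field K] (hK : 2 < Cardinal.mk K)
    (n r : ℕ) (hn : 3 ≤ n) (hrn : r < n)
    (A : Matrix (Fin n) (Fin n) K) (hSym : Aᵀ = A) (d : K)
    (hrk : ∀ t : K,
      (A + t • (Matrix.single (⟨0, by omega⟩ : Fin n) (⟨n - 1, by omega⟩ : Fin n) (1 : K)
        + Matrix.single (⟨n - 1, by omega⟩ : Fin n) (⟨0, by omega⟩ : Fin n) (1 : K)
        + Matrix.single (⟨n - 1, by omega⟩ : Fin n) (⟨n - 1, by omega⟩ : Fin n) d)).rank ≤ r) :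
    (A.submatrix
      (fun i : Fin (n - 2) => (⟨i.1 + 1, by have := i.2; omega⟩ : Fin n))
      (fun j : Fin (n - 2) => (⟨j.1 + 1, by have := j.2; omega⟩ : Fin n))).rank ≤ r - 2 := by
  classical
  let i0 : Fin n := ⟨0, by omega⟩
  let iN : Fin n := ⟨n - 1, by omega⟩
  let e : Fin (n - 2) → Fin n := fun j => ⟨j.1 + 1, by have := j.2; omega⟩
  let Nmat : Matrix (Fin n) (Fin n) K :=
    Matrix.single i0 iN (1 : K) + Matrix.single iN i0 (1 : K)
      + Matrix.single iN iN d
  let Bm : Matrix (Fin (n - 2)) (Fin (n - 2)) K := A.submatrix e e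
  show Bm.rank ≤ r - 2
  have hrk' : ∀ t : K, (A + t • Nmat).rank ≤ r := fun t => hrk t
  have hA : ∀ p q, A p q = A q p := fun p q => congrFun (congrFun hSym q) p
  have h0e : ∀ j : Fin (n - 2), i0 ≠ e j := by
    intro j h; rw [Fin.ext_iff] at h; simp [i0, e] at h
  have hNe : ∀ j : Fin (n - 2), iN ≠ e j := by
    intro j h; rw [Fin.ext_iff] at h; have := j.2; simp [iN, e] at h; omega
  have h0N : i0 ≠ iN := by
    intro h; rw [Fin.ext_iff] at h; simp [i0, iN] at h; omega
  have htri : ∀ i : Fin n, i = i0 ∨ i = iN ∨ ∃ j : Fin (n - 2), i = e j := by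
    intro i
    by_cases h0 : i.1 = 0
    · exact Or.inl (Fin.ext h0)
    · by_cases hNn : i.1 = n - 1
      · exact Or.inr (Or.inl (Fin.ext hNn))
      · have hi := i.2
        refine Or.inr (Or.inr ⟨⟨i.1 - 1, by omega⟩, Fin.ext ?_⟩)
        simp [e]; omega
  let Lvec : Fin (n - 2) → K := fun j => A (e j) i0
  let Cvec : Fin (n - 2) → K := fun j => A (e j) iN
  have hBs : ∀ j j', Bm j j' = Bm j' j := fun j j' => hA (e j) (e j')
  have hdot : ∀ u w : Fin (n - 2) → K,
      ∑ j, (Bm.mulVec u) j * w j = ∑ j, u j * (Bm.mulVec w) j := by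
    intro u w
    simp only [Matrix.mulVec, dotProduct, Finset.sum_mul, Finset.mul_sum]
    rw [Finset.sum_comm]
    refine Finset.sum_congr rfl fun a _ => Finset.sum_congr rfl fun b _ => ?_
    rw [hBs b a]; ring
  have key : ∀ (t : K) (v : Fin n → K), (A + t • Nmat).mulVec v = 0 →
      (∀ j, Bm.mulVec (fun j' => v (e j')) j + v i0 * Lvec j + v iN * Cvec j = 0) ∧
      (A i0 i0 * v i0 + (A i0 iN + t) * v iN + ∑ j, Lvec j * v (e j) = 0) ∧
      ((A i0 iN + t) * v i0 + (A iN iN + t * d) * v iN + ∑ j, Cvec j * v (e j) = 0) := by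
    intro t v hv
    have hrow : ∀ p : Fin n,
        ((A + t • Nmat) p i0) * v i0 + ((A + t • Nmat) p iN) * v iN
          + ∑ j, ((A + t • Nmat) p (e j)) * v (e j) = 0 := by
      intro p
      have h1 : Matrix.mulVec (A + t • Nmat) v p = 0 := by rw [hv]; rfl
      rw [Matrix.mulVec, dotProduct] at h1
      rw [aux_sum_split hn (fun i => (A + t • Nmat) p i * v i)] at h1
      exact h1
    have hstd : ∀ (i j p q : Fin n) (a : K),
        Matrix.single i j a p q = if i = p ∧ j = q then a else 0 := fun _ _ _ _ _ => rfl
    have hemid : ∀ (j : Fin (n - 2)) (i : Fin n), (A + t • Nmat) (e j) i = A (e j) i := by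
      intro j i
      simp [Nmat, Matrix.add_apply, Matrix.smul_apply, hstd, (h0e j), (hNe j)]
    have he00 : (A + t • Nmat) i0 i0 = A i0 i0 := by
      simp [Nmat, Matrix.add_apply, Matrix.smul_apply, hstd, h0N, h0N.symm]
    have he0j : ∀ j, (A + t • Nmat) i0 (e j) = Lvec j := by
      intro j
      simp [Nmat, Matrix.add_apply, Matrix.smul_apply, hstd, h0N.symm, (hNe j), Lvec]
      exact hA i0 (e j)
    have he0N : (A + t • Nmat) i0 iN = A i0 iN + t := by
      simp [Nmat, Matrix.add_apply, Matrix.smul_apply, hstd, h0N.symm]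
    have heN0 : (A + t • Nmat) iN i0 = A i0 iN + t := by
      simp [Nmat, Matrix.add_apply, Matrix.smul_apply, hstd, h0N, h0N.symm]
      exact hA iN i0
    have heNj : ∀ j, (A + t • Nmat) iN (e j) = Cvec j := by
      intro j
      simp [Nmat, Matrix.add_apply, Matrix.smul_apply, hstd, h0N, (h0e j), (hNe j), Cvec]
      try exact hA iN (e j)
    have heNN : (A + t • Nmat) iN iN = A iN iN + t * d := by
      simp [Nmat, Matrix.add_apply, Matrix.smul_apply, hstd, h0N, h0N.symm]
      try ring
    refine ⟨?_, ?_, ?_⟩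
    · intro j
      have h := hrow (e j)
      simp only [hemid] at h
      have hval : Bm.mulVec (fun j' => v (e j')) j = ∑ j', A (e j) (e j') * v (e j') := by
        simp [Bm, Matrix.mulVec, dotProduct, Matrix.submatrix_apply]
      rw [hval]
      simp only [Lvec, Cvec]
      linear_combination h
    · have h := hrow i0
      rw [he00, he0N] at h
      simp only [he0j] at h
      linear_combination h
    · have h := hrow iN
      rw [heN0, heNN] at h
      simp only [heNj] at h
      linear_combination h
  
  -- scalar helpers
  have sum_comb2 : ∀ (u f g : Fin (n - 2) → K) (P Q : K),
      ∑ j, u j * (-(P * f j) - Q * g j)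
        = -(P * ∑ j, u j * f j) - Q * ∑ j, u j * g j := by
    intro u f g P Q
    calc ∑ j, u j * (-(P * f j) - Q * g j)
        = ∑ j, (-(P * (u j * f j)) - Q * (u j * g j)) :=
          Finset.sum_congr rfl fun j _ => by ring
      _ = _ := by
          rw [Finset.sum_sub_distrib, Finset.sum_neg_distrib, ← Finset.mul_sum, ← Finset.mul_sum]
  have vzero : ∀ v : Fin n → K, v i0 = 0 → v iN = 0 → (∀ j, v (e j) = 0) → v = 0 := by
    intro v h0 hN hm; funext i
    rcases htri i with h | h | ⟨j, h⟩ <;> simp [h, h0, hN, hm]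
  have hz3 : ∃ z : K, z ≠ 0 ∧ z ≠ 1 := by
    by_contra hcon
    push_neg at hcon
    have hsub : (Set.univ : Set K) ⊆ {0, 1} := by
      intro y _
      rcases eq_or_ne y 0 with h | h
      · simp [h]
      · simp [hcon y h]
    have h2 : Cardinal.mk K ≤ 2 := by
      have h3 := Cardinal.mk_le_mk_of_subset hsub
      rw [Cardinal.mk_univ] at h3
      refine h3.trans (le_trans Cardinal.mk_insert_le ?_)
      rw [Cardinal.mk_singleton]
      norm_num
    exact absurd hK (not_lt.mpr h2)
  have hquad : ∀ a' b' c' : K, ∃ t : K, a' * (c' + t * d) - (b' + t) ^ 2 ≠ 0 := by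
    intro a' b' c'
    by_contra hcon
    push_neg at hcon
    obtain ⟨z, hz0, hz1⟩ := hz3
    have h1 : z * (1 - z) = 0 := by
      have e0 := hcon 0; have e1 := hcon 1; have ez := hcon z
      linear_combination ez - e0 - z * (e1 - e0)
    rcases mul_eq_zero.mp h1 with h | h
    · exact hz0 h
    · exact hz1 (by linear_combination -h)
  -- the linear maps used for comparison of kernels
  let gm : (Fin (n - 2) → K) → (Fin (n - 2) → K) → (Fin n → K) →ₗ[K] (Fin (n - 2) → K) :=
    fun w1 w2 =>
      LinearMap.funLeft K K e + (LinearMap.proj i0).smulRight w1 + (LinearMap.proj iN).smulRight w2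
  have hgm : ∀ w1 w2 (v : Fin n → K) j,
      gm w1 w2 v j = v (e j) + v i0 * w1 j + v iN * w2 j := by
    intro w1 w2 v j
    simp [gm, LinearMap.funLeft_apply, LinearMap.smulRight_apply, LinearMap.proj_apply,
      Function.comp]
  have hgmvec : ∀ w1 w2 (v : Fin n → K),
      gm w1 w2 v = (fun j' => v (e j')) + v i0 • w1 + v iN • w2 := by
    intro w1 w2 v; funext j; simp [hgm]
  -- reduction to kernel dimensions
  have hrank_def : ∀ (m : ℕ) (M : Matrix (Fin m) (Fin m) K),
      M.rank = Module.finrank K ↥(LinearMap.range M.mulVecLin) := fun _ _ => rfl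
  suffices hsuf : ∃ t : K,
      Module.finrank K ↥(LinearMap.ker (A + t • Nmat).mulVecLin)
        ≤ Module.finrank K ↥(LinearMap.ker Bm.mulVecLin) by
    obtain ⟨t, hle⟩ := hsuf
    have h1 : (A + t • Nmat).rank
        + Module.finrank K ↥(LinearMap.ker (A + t • Nmat).mulVecLin) = n := by
      rw [hrank_def]
      have h := LinearMap.finrank_range_add_finrank_ker (A + t • Nmat).mulVecLin
      rwa [Module.finrank_fin_fun] at h
    have h2 : Bm.rank + Module.finrank K ↥(LinearMap.ker Bm.mulVecLin) = n - 2 := by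
      rw [hrank_def]
      have h := LinearMap.finrank_range_add_finrank_ker Bm.mulVecLin
      rwa [Module.finrank_fin_fun] at h
    have h3 := hrk' t
    omega
  -- case analysis
  by_cases hL : ∃ u, Bm.mulVec u = Lvec
  · obtain ⟨u, hu⟩ := hL
    by_cases hC : ∃ x, Bm.mulVec x = Cvec
    · -- Case 1 : both borders in the range of B
      obtain ⟨x, hx⟩ := hC
      obtain ⟨t, ht⟩ := hquad (A i0 i0 - ∑ j, u j * Lvec j) (A i0 iN - ∑ j, u j * Cvec j)
        (A iN iN - ∑ j, x j * Cvec j)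
      refine ⟨t, aux_finrank_le _ _ (gm u x) ?_ ?_⟩
      · intro v hv
        have hv' : (A + t • Nmat).mulVec v = 0 := by
          rw [LinearMap.mem_ker, Matrix.mulVecLin_apply] at hv; exact hv
        obtain ⟨hmid, hE0, hEN⟩ := key t v hv'
        rw [LinearMap.mem_ker, Matrix.mulVecLin_apply, hgmvec, Matrix.mulVec_add,
          Matrix.mulVec_add, Matrix.mulVec_smul, Matrix.mulVec_smul, hu, hx]
        funext j
        simpa using hmid j
      · intro v hv hg0
        have hv' : (A + t • Nmat).mulVec v = 0 := by
          rw [LinearMap.mem_ker, Matrix.mulVecLin_apply] at hv; exact hv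
        obtain ⟨hmid, hE0, hEN⟩ := key t v hv'
        have hmid' : ∀ j, (Bm.mulVec (fun j' => v (e j'))) j
            = -(v i0 * Lvec j) - v iN * Cvec j := fun j => by linear_combination hmid j
        have hg : ∀ j, v (e j) = -(v i0 * u j) - v iN * x j := by
          intro j
          have h := congrFun hg0 j
          rw [hgm] at h
          simp only [Pi.zero_apply] at h
          linear_combination h
        have hSL : ∑ j, Lvec j * v (e j)
            = -(v i0 * ∑ j, u j * Lvec j) - v iN * ∑ j, u j * Cvec j := by
          calc ∑ j, Lvec j * v (e j) = ∑ j, (Bm.mulVec u) j * v (e j) := by rw [hu]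
            _ = ∑ j, u j * (Bm.mulVec (fun j' => v (e j'))) j := hdot u _
            _ = ∑ j, u j * (-(v i0 * Lvec j) - v iN * Cvec j) :=
                Finset.sum_congr rfl fun j _ => by rw [hmid' j]
            _ = _ := sum_comb2 u Lvec Cvec (v i0) (v iN)
        have hxL : ∑ j, x j * Lvec j = ∑ j, u j * Cvec j := by
          calc ∑ j, x j * Lvec j = ∑ j, (Bm.mulVec u) j * x j := by
                rw [← hu]; exact Finset.sum_congr rfl fun j _ => by ring
            _ = ∑ j, u j * (Bm.mulVec x) j := hdot u x
            _ = ∑ j, u j * Cvec j := by rw [hx]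
        have hSC : ∑ j, Cvec j * v (e j)
            = -(v i0 * ∑ j, u j * Cvec j) - v iN * ∑ j, x j * Cvec j := by
          calc ∑ j, Cvec j * v (e j) = ∑ j, (Bm.mulVec x) j * v (e j) := by rw [hx]
            _ = ∑ j, x j * (Bm.mulVec (fun j' => v (e j'))) j := hdot x _
            _ = ∑ j, x j * (-(v i0 * Lvec j) - v iN * Cvec j) :=
                Finset.sum_congr rfl fun j _ => by rw [hmid' j]
            _ = -(v i0 * ∑ j, x j * Lvec j) - v iN * ∑ j, x j * Cvec j :=
                sum_comb2 x Lvec Cvec (v i0) (v iN)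
            _ = _ := by rw [hxL]
        rw [hSL] at hE0
        rw [hSC] at hEN
        have hP : v i0 = 0 := by
          have h : ((A i0 i0 - ∑ j, u j * Lvec j)
              * ((A iN iN - ∑ j, x j * Cvec j) + t * d)
              - ((A i0 iN - ∑ j, u j * Cvec j) + t) ^ 2) * v i0 = 0 := by
            linear_combination ((A iN iN - ∑ j, x j * Cvec j) + t * d) * hE0
              - ((A i0 iN - ∑ j, u j * Cvec j) + t) * hEN
          rcases mul_eq_zero.mp h with h' | h'
          · exact absurd h' ht
          · exact h'
        have hQ : v iN = 0 := by
          have h : ((A i0 i0 - ∑ j, u j * Lvec j)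
              * ((A iN iN - ∑ j, x j * Cvec j) + t * d)
              - ((A i0 iN - ∑ j, u j * Cvec j) + t) ^ 2) * v iN = 0 := by
            linear_combination (A i0 i0 - ∑ j, u j * Lvec j) * hEN
              - ((A i0 iN - ∑ j, u j * Cvec j) + t) * hE0
          rcases mul_eq_zero.mp h with h' | h'
          · exact absurd h' ht
          · exact h'
        exact vzero v hP hQ fun j => by rw [hg j, hP, hQ]; ring
    · -- Case 2 : L in range, C not
      obtain ⟨t, ht⟩ : ∃ t : K, (A i0 iN + t) - ∑ j, Cvec j * u j ≠ 0 := by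
        obtain ⟨t, ht⟩ := exists_ne ((∑ j, Cvec j * u j) - A i0 iN)
        exact ⟨t, fun h => ht (by linear_combination h)⟩
      have hker2 : ∀ v : Fin n → K, (A + t • Nmat).mulVec v = 0 →
          v iN = 0 ∧ Bm.mulVec ((fun j' => v (e j')) + v i0 • u) = 0 := by
        intro v hv'
        obtain ⟨hmid, hE0, hEN⟩ := key t v hv'
        have hz : Bm.mulVec ((fun j' => v (e j')) + v i0 • u) = (-(v iN)) • Cvec := by
          rw [Matrix.mulVec_add, Matrix.mulVec_smul, hu]
          funext j
          simp only [Pi.add_apply, Pi.smul_apply, smul_eq_mul]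
          linear_combination hmid j
        have hq : v iN = 0 := by
          by_contra hq
          apply hC
          refine ⟨(-(v iN))⁻¹ • ((fun j' => v (e j')) + v i0 • u), ?_⟩
          rw [Matrix.mulVec_smul, hz, smul_smul, inv_mul_cancel₀ (neg_ne_zero.mpr hq), one_smul]
        refine ⟨hq, by rw [hz, hq]; simp⟩
      refine ⟨t, aux_finrank_le _ _ (gm u 0) ?_ ?_⟩
      · intro v hv
        have hv' : (A + t • Nmat).mulVec v = 0 := by
          rw [LinearMap.mem_ker, Matrix.mulVecLin_apply] at hv; exact hv
        obtain ⟨hq, hzero⟩ := hker2 v hv'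
        rw [LinearMap.mem_ker, Matrix.mulVecLin_apply, hgmvec]
        simpa [hq] using hzero
      · intro v hv hg0
        have hv' : (A + t • Nmat).mulVec v = 0 := by
          rw [LinearMap.mem_ker, Matrix.mulVecLin_apply] at hv; exact hv
        obtain ⟨hq, hzero⟩ := hker2 v hv'
        obtain ⟨hmid, hE0, hEN⟩ := key t v hv'
        have hg : ∀ j, v (e j) = -(v i0 * u j) := by
          intro j
          have h := congrFun hg0 j
          rw [hgm] at h
          simp only [Pi.zero_apply, mul_zero] at h
          linear_combination h
        have hS : ∑ j, Cvec j * v (e j) = -(v i0 * ∑ j, Cvec j * u j) := by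
          calc ∑ j, Cvec j * v (e j) = ∑ j, -(v i0 * (Cvec j * u j)) :=
                Finset.sum_congr rfl fun j _ => by rw [hg j]; ring
            _ = _ := by rw [Finset.sum_neg_distrib, ← Finset.mul_sum]
        have hP : v i0 = 0 := by
          have h : ((A i0 iN + t) - ∑ j, Cvec j * u j) * v i0 = 0 := by
            rw [hq] at hEN
            linear_combination hEN - hS
          rcases mul_eq_zero.mp h with h' | h'
          · exact absurd h' ht
          · exact h'
        exact vzero v hP hq fun j => by rw [hg j, hP]; ring
  · by_cases hC : ∃ x, Bm.mulVec x = Cvec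
    · -- Case 3 : C in range, L not
      obtain ⟨x, hx⟩ := hC
      obtain ⟨t, ht⟩ : ∃ t : K, (A i0 iN + t) - ∑ j, Lvec j * x j ≠ 0 := by
        obtain ⟨t, ht⟩ := exists_ne ((∑ j, Lvec j * x j) - A i0 iN)
        exact ⟨t, fun h => ht (by linear_combination h)⟩
      have hker3 : ∀ v : Fin n → K, (A + t • Nmat).mulVec v = 0 →
          v i0 = 0 ∧ Bm.mulVec ((fun j' => v (e j')) + v iN • x) = 0 := by
        intro v hv'
        obtain ⟨hmid, hE0, hEN⟩ := key t v hv'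
        have hz : Bm.mulVec ((fun j' => v (e j')) + v iN • x) = (-(v i0)) • Lvec := by
          rw [Matrix.mulVec_add, Matrix.mulVec_smul, hx]
          funext j
          simp only [Pi.add_apply, Pi.smul_apply, smul_eq_mul]
          linear_combination hmid j
        have hq : v i0 = 0 := by
          by_contra hq
          apply hL
          refine ⟨(-(v i0))⁻¹ • ((fun j' => v (e j')) + v iN • x), ?_⟩
          rw [Matrix.mulVec_smul, hz, smul_smul, inv_mul_cancel₀ (neg_ne_zero.mpr hq), one_smul]
        refine ⟨hq, by rw [hz, hq]; simp⟩
      refine ⟨t, aux_finrank_le _ _ (gm 0 x) ?_ ?_⟩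
      · intro v hv
        have hv' : (A + t • Nmat).mulVec v = 0 := by
          rw [LinearMap.mem_ker, Matrix.mulVecLin_apply] at hv; exact hv
        obtain ⟨hq, hzero⟩ := hker3 v hv'
        rw [LinearMap.mem_ker, Matrix.mulVecLin_apply, hgmvec]
        simpa [hq] using hzero
      · intro v hv hg0
        have hv' : (A + t • Nmat).mulVec v = 0 := by
          rw [LinearMap.mem_ker, Matrix.mulVecLin_apply] at hv; exact hv
        obtain ⟨hq, hzero⟩ := hker3 v hv'
        obtain ⟨hmid, hE0, hEN⟩ := key t v hv'
        have hg : ∀ j, v (e j) = -(v iN * x j) := by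
          intro j
          have h := congrFun hg0 j
          rw [hgm] at h
          simp only [Pi.zero_apply, mul_zero] at h
          linear_combination h
        have hS : ∑ j, Lvec j * v (e j) = -(v iN * ∑ j, Lvec j * x j) := by
          calc ∑ j, Lvec j * v (e j) = ∑ j, -(v iN * (Lvec j * x j)) :=
                Finset.sum_congr rfl fun j _ => by rw [hg j]; ring
            _ = _ := by rw [Finset.sum_neg_distrib, ← Finset.mul_sum]
        have hQ : v iN = 0 := by
          have h : ((A i0 iN + t) - ∑ j, Lvec j * x j) * v iN = 0 := by
            rw [hq] at hE0
            linear_combination hE0 - hS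
          rcases mul_eq_zero.mp h with h' | h'
          · exact absurd h' ht
          · exact h'
        exact vzero v hq hQ fun j => by rw [hg j, hQ]; ring
    · by_cases h4 : ∃ (lam : K) (w : Fin (n - 2) → K), Bm.mulVec w = Lvec + lam • Cvec
      · -- Case 4a
        obtain ⟨lam, w, hw⟩ := h4
        have hlam : lam ≠ 0 := by
          intro h
          exact hL ⟨w, by rw [hw, h]; simp⟩
        obtain ⟨t, ht⟩ : ∃ t : K,
            A i0 i0 + (A i0 iN + t) * lam - ∑ j, Lvec j * w j ≠ 0 := by
          obtain ⟨t, ht⟩ := exists_ne (((∑ j, Lvec j * w j) - A i0 i0) / lam - A i0 iN)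
          refine ⟨t, fun h => ht ?_⟩
          field_simp
          linear_combination h
        have hker4 : ∀ v : Fin n → K, (A + t • Nmat).mulVec v = 0 →
            v iN = lam * v i0 ∧ Bm.mulVec ((fun j' => v (e j')) + v i0 • w) = 0 := by
          intro v hv'
          obtain ⟨hmid, hE0, hEN⟩ := key t v hv'
          have hz : Bm.mulVec ((fun j' => v (e j')) + v i0 • w)
              = (lam * v i0 - v iN) • Cvec := by
            rw [Matrix.mulVec_add, Matrix.mulVec_smul, hw]
            funext j
            simp only [Pi.add_apply, Pi.smul_apply, smul_eq_mul]
            linear_combination hmid j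
          have hq : lam * v i0 - v iN = 0 := by
            by_contra hq
            apply hC
            refine ⟨(lam * v i0 - v iN)⁻¹ • ((fun j' => v (e j')) + v i0 • w), ?_⟩
            rw [Matrix.mulVec_smul, hz, smul_smul, inv_mul_cancel₀ hq, one_smul]
          refine ⟨by linear_combination -hq, by rw [hz, hq]; simp⟩
        refine ⟨t, aux_finrank_le _ _ (gm w 0) ?_ ?_⟩
        · intro v hv
          have hv' : (A + t • Nmat).mulVec v = 0 := by
            rw [LinearMap.mem_ker, Matrix.mulVecLin_apply] at hv; exact hv
          obtain ⟨hq, hzero⟩ := hker4 v hv'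
          rw [LinearMap.mem_ker, Matrix.mulVecLin_apply, hgmvec]
          simpa using hzero
        · intro v hv hg0
          have hv' : (A + t • Nmat).mulVec v = 0 := by
            rw [LinearMap.mem_ker, Matrix.mulVecLin_apply] at hv; exact hv
          obtain ⟨hq, hzero⟩ := hker4 v hv'
          obtain ⟨hmid, hE0, hEN⟩ := key t v hv'
          have hg : ∀ j, v (e j) = -(v i0 * w j) := by
            intro j
            have h := congrFun hg0 j
            rw [hgm] at h
            simp only [Pi.zero_apply, mul_zero] at h
            linear_combination h
          have hS : ∑ j, Lvec j * v (e j) = -(v i0 * ∑ j, Lvec j * w j) := by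
            calc ∑ j, Lvec j * v (e j) = ∑ j, -(v i0 * (Lvec j * w j)) :=
                  Finset.sum_congr rfl fun j _ => by rw [hg j]; ring
              _ = _ := by rw [Finset.sum_neg_distrib, ← Finset.mul_sum]
          have hP : v i0 = 0 := by
            have h : (A i0 i0 + (A i0 iN + t) * lam - ∑ j, Lvec j * w j) * v i0 = 0 := by
              rw [hq] at hE0
              linear_combination hE0 - hS
            rcases mul_eq_zero.mp h with h' | h'
            · exact absurd h' ht
            · exact h'
          have hQ : v iN = 0 := by rw [hq, hP, mul_zero]
          exact vzero v hP hQ fun j => by rw [hg j, hP]; ring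
      · -- Case 4b
        have hker5 : ∀ v : Fin n → K, (A + (0 : K) • Nmat).mulVec v = 0 →
            v i0 = 0 ∧ v iN = 0 ∧ Bm.mulVec (fun j' => v (e j')) = 0 := by
          intro v hv'
          obtain ⟨hmid, hE0, hEN⟩ := key 0 v hv'
          have hmid' : ∀ j, (Bm.mulVec (fun j' => v (e j'))) j
              = -(v i0 * Lvec j) - v iN * Cvec j := fun j => by linear_combination hmid j
          have hP : v i0 = 0 := by
            by_contra hP
            apply h4
            refine ⟨v iN / v i0, (-(v i0)⁻¹) • (fun j' => v (e j')), ?_⟩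
            rw [Matrix.mulVec_smul]
            funext j
            simp only [Pi.smul_apply, Pi.add_apply, smul_eq_mul]
            rw [hmid' j]
            field_simp
            ring
          have hQ : v iN = 0 := by
            by_contra hQ
            apply hC
            refine ⟨(-(v iN)⁻¹) • (fun j' => v (e j')), ?_⟩
            rw [Matrix.mulVec_smul]
            funext j
            simp only [Pi.smul_apply, smul_eq_mul]
            rw [hmid' j, hP]
            field_simp
            ring
          refine ⟨hP, hQ, ?_⟩
          funext j
          simp only [Pi.zero_apply]
          rw [hmid' j, hP, hQ]
          ring
        refine ⟨0, aux_finrank_le _ _ (gm 0 0) ?_ ?_⟩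
        · intro v hv
          have hv' : (A + (0 : K) • Nmat).mulVec v = 0 := by
            rw [LinearMap.mem_ker, Matrix.mulVecLin_apply] at hv; exact hv
          obtain ⟨hP, hQ, hzero⟩ := hker5 v hv'
          rw [LinearMap.mem_ker, Matrix.mulVecLin_apply, hgmvec]
          simpa using hzero
        · intro v hv hg0
          have hv' : (A + (0 : K) • Nmat).mulVec v = 0 := by
            rw [LinearMap.mem_ker, Matrix.mulVecLin_apply] at hv; exact hv
          obtain ⟨hP, hQ, hzero⟩ := hker5 v hv'
          have hg : ∀ j, v (e j) = 0 := by
            intro j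
            have h := congrFun hg0 j
            rw [hgm] at h
            simpa using h
          exact vzero v hP hQ hg
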